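/- Combining the above (Proposition 3 of the paper): if θ is invertible, Y = θX = (θ+Δθ)(X+ΔX) with ΔθΔX = 0, and X has full row rank, then ‖Δθ‖/‖θ‖ ≤ ‖ΔX‖ · Σᵢ₌₁^r (1/σᵢ) ‖vᵢuᵢᵀ‖, where σᵢ, uᵢ, vᵢ come from the SVD of X. -/

import Mathlib

open Matrix
open scoped Matrix.Norms.L2Operator

lemma vmv_mul_vmv {k l p : Type*} [Fintype k] [Fintype l] [Fintype p]
    (a : k → ℝ) (b : l → ℝ) (c : l → ℝ) (d : p → ℝ) :
    vecMulVec a b * vecMulVec c d = (b ⬝ᵥ c) • vecMulVec a d := by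
  ext i j
  simp only [Matrix.mul_apply, vecMulVec_apply, Matrix.smul_apply, smul_eq_mul,
    dotProduct, Finset.sum_mul]
  exact Finset.sum_congr rfl fun x _ => by ring

/-- Proposition 3 of the paper: if `θ` is invertible, `Y = θX = (θ+Δθ)(X+ΔX)` with
`ΔθΔX = 0`, and `X` has full row rank `n` with SVD `X = Σᵢ σᵢ uᵢ vᵢᵀ`, then
`‖Δθ‖/‖θ‖ ≤ ‖ΔX‖ · Σᵢ σᵢ⁻¹ ‖vᵢ uᵢᵀ‖`. -/
theorem stmt10 {n m : ℕ} (θ Δθ : Matrix (Fin n) (Fin n) ℝ)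
    (X ΔX Y : Matrix (Fin n) (Fin m) ℝ) (hθ : Invertible θ)
    (hY : Y = θ * X) (hY' : Y = (θ + Δθ) * (X + ΔX)) (h2 : Δθ * ΔX = 0)
    (hrank : X.rank = n)
    (σ : Fin n → ℝ) (hσ : ∀ i, 0 < σ i)
    (u : Fin n → (Fin n → ℝ)) (v : Fin n → (Fin m → ℝ))
    (hu : ∀ i j, u i ⬝ᵥ u j = if i = j then 1 else 0)
    (hv : ∀ i j, v i ⬝ᵥ v j = if i = j then 1 else 0)
    (hX : X = ∑ i, σ i • vecMulVec (u i) (v i)) :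
    ‖Δθ‖ / ‖θ‖ ≤ ‖ΔX‖ * ∑ i, (σ i)⁻¹ * ‖vecMulVec (v i) (u i)‖ := by
  classical
  set P : Matrix (Fin m) (Fin n) ℝ := ∑ i, (σ i)⁻¹ • vecMulVec (v i) (u i) with hP
  set U : Matrix (Fin n) (Fin n) ℝ := Matrix.of u with hU
  have hUUT : U * Uᵀ = 1 := by
    ext i j
    simpa [hU, Matrix.mul_apply, Matrix.one_apply, dotProduct] using hu i j
  have hUTU : Uᵀ * U = 1 := mul_eq_one_comm.mp hUUT
  -- X * P = 1
  have hXP : X * P = 1 := by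
    have key : X * P = ∑ i, vecMulVec (u i) (u i) := by
      rw [hX, hP, Matrix.sum_mul]
      have : ∀ i j : Fin n,
          (σ i • vecMulVec (u i) (v i)) * ((σ j)⁻¹ • vecMulVec (v j) (u j))
            = if i = j then vecMulVec (u i) (u i) else 0 := by
        intro i j
        rw [Matrix.smul_mul, Matrix.mul_smul, vmv_mul_vmv, hv i j]
        rcases eq_or_ne i j with h | h
        · subst h
          simp [smul_smul, mul_inv_cancel₀ (hσ i).ne']
        · simp [h]
      simp_rw [Matrix.mul_sum, this]
      simp
    rw [key, ← hUTU]
    ext a b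
    simp [Matrix.mul_apply, Matrix.sum_apply, vecMulVec_apply, hU, mul_comm]
  -- θ * ΔX + Δθ * X = 0
  have h0 : θ * ΔX + Δθ * X = 0 := by
    have h := hY.symm.trans hY'
    rw [Matrix.add_mul, Matrix.mul_add, Matrix.mul_add, h2, add_zero, add_assoc] at h
    have h' : θ * X + 0 = θ * X + (θ * ΔX + Δθ * X) := by rw [add_zero]; exact h
    exact (add_left_cancel h').symm
  have hkey : Δθ * X = -(θ * ΔX) := eq_neg_of_add_eq_zero_right h0
  -- Δθ = -(θ * (ΔX * P))
  have hΔθ : Δθ = -(θ * (ΔX * P)) := by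
    calc Δθ = Δθ * (X * P) := by rw [hXP, mul_one]
    _ = (Δθ * X) * P := (Matrix.mul_assoc Δθ X P).symm
    _ = -(θ * ΔX) * P := by rw [hkey]
    _ = -(θ * (ΔX * P)) := by rw [Matrix.neg_mul, Matrix.mul_assoc]
  -- norm bounds
  have hPnorm : ‖P‖ ≤ ∑ i, (σ i)⁻¹ * ‖vecMulVec (v i) (u i)‖ := by
    rw [hP]
    refine (norm_sum_le _ _).trans (Finset.sum_le_sum fun i _ => ?_)
    rw [norm_smul, Real.norm_eq_abs, abs_of_nonneg (inv_nonneg.mpr (hσ i).le)]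
  have hRHSnn : (0:ℝ) ≤ ∑ i, (σ i)⁻¹ * ‖vecMulVec (v i) (u i)‖ :=
    Finset.sum_nonneg fun i _ => mul_nonneg (inv_nonneg.mpr (hσ i).le) (norm_nonneg _)
  have hbound : ‖Δθ‖ ≤ ‖θ‖ * (‖ΔX‖ * ∑ i, (σ i)⁻¹ * ‖vecMulVec (v i) (u i)‖) := by
    rw [hΔθ, norm_neg]
    calc ‖θ * (ΔX * P)‖ ≤ ‖θ‖ * ‖ΔX * P‖ := Matrix.l2_opNorm_mul θ (ΔX * P)
    _ ≤ ‖θ‖ * (‖ΔX‖ * ‖P‖) :=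
        mul_le_mul_of_nonneg_left (Matrix.l2_opNorm_mul ΔX P) (norm_nonneg θ)
    _ ≤ ‖θ‖ * (‖ΔX‖ * ∑ i, (σ i)⁻¹ * ‖vecMulVec (v i) (u i)‖) := by
        exact mul_le_mul_of_nonneg_left
          (mul_le_mul_of_nonneg_left hPnorm (norm_nonneg ΔX)) (norm_nonneg θ)
  rcases eq_or_lt_of_le (norm_nonneg θ) with hz | hz
  · have hΔ0 : ‖Δθ‖ = 0 := le_antisymm (by simpa [← hz] using hbound) (norm_nonneg _)
    rw [hΔ0, zero_div]
    exact mul_nonneg (norm_nonneg _) hRHSnn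
  · rw [div_le_iff₀ hz]
    linarith [hbound]
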